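/- Let h : ℝ and define the real 3×3 matrices X := ![![0,2,0], ![0,0,2], ![0,0,0]], Y := ![![0, h^2/2, 0], ![1, 0, −3h^2/2], ![0, 1, 0]], H := ![![2, 0, −4h^2], ![0, 0, 0], ![0, 0, −2]]. Then, with exp denoting the matrix exponential, the following hold: (i) h • (H*X − X*H) = exp(h•X) − exp(−h•X); (ii) X*Y − Y*X = H; (iii) 2 • (H*Y − Y*H) = −( Y*(exp(h•X)+exp(−h•X)) + (exp(h•X)+exp(−h•X))*Y ). -/

import Mathlib

open Matrix

lemma exp_cube_zero {A : Matrix (Fin 3) (Fin 3) ℝ} (hA : A ^ 3 = 0) :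
    NormedSpace.exp A = 1 + A + (2 : ℝ)⁻¹ • A ^ 2 := by
  have hzero : ∀ n ∉ Finset.range 3, ((n.factorial : ℝ)⁻¹) • A ^ n = 0 := by
    intro n hn
    have h3 : 3 ≤ n := by simpa using hn
    have : A ^ n = 0 := by
      calc A ^ n = A ^ 3 * A ^ (n - 3) := by rw [← pow_add]; congr 1; omega
        _ = 0 := by rw [hA, zero_mul]
    simp [this]
  rw [NormedSpace.exp_eq_tsum (𝕂 := ℝ)]
  rw [show (fun x : Matrix (Fin 3) (Fin 3) ℝ => ∑' n : ℕ, ((n.factorial : ℝ))⁻¹ • x ^ n) A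
      = ∑' n : ℕ, ((n.factorial : ℝ))⁻¹ • A ^ n from rfl, tsum_eq_sum hzero]
  simp [Finset.sum_range_succ, Nat.factorial]

set_option maxHeartbeats 2000000 in
theorem jordanian_spin_one_representation (h : ℝ)
    (X : Matrix (Fin 3) (Fin 3) ℝ) (Y : Matrix (Fin 3) (Fin 3) ℝ)
    (H : Matrix (Fin 3) (Fin 3) ℝ)
    (hX : X = !![0, 2, 0; 0, 0, 2; 0, 0, 0])
    (hY : Y = !![0, h ^ 2 / 2, 0; 1, 0, -(3 * h ^ 2) / 2; 0, 1, 0])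
    (hH : H = !![2, 0, -(4 * h ^ 2); 0, 0, 0; 0, 0, -2]) :
    h • (H * X - X * H) = NormedSpace.exp (h • X) - NormedSpace.exp (-(h • X)) ∧
    X * Y - Y * X = H ∧
    (2 : ℝ) • (H * Y - Y * H) =
      -(Y * (NormedSpace.exp (h • X) + NormedSpace.exp (-(h • X))) +
        (NormedSpace.exp (h • X) + NormedSpace.exp (-(h • X))) * Y) := by
  subst hX hY hH
  set M : Matrix (Fin 3) (Fin 3) ℝ := !![0, 2, 0; 0, 0, 2; 0, 0, 0] with hM
  have hMsq : M ^ 2 = !![0, 0, 4; 0, 0, 0; 0, 0, 0] := by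
    ext i j
    fin_cases i <;> fin_cases j <;>
      simp [hM, pow_two, Matrix.mul_apply, Fin.sum_univ_three, Matrix.vecHead, Matrix.vecTail]; norm_num
  have hM3 : M ^ 3 = 0 := by
    have : M ^ 3 = M ^ 2 * M := by rw [pow_succ]
    rw [this, hMsq]
    ext i j
    fin_cases i <;> fin_cases j <;>
      simp [hM, Matrix.mul_apply, Fin.sum_univ_three, Matrix.vecHead, Matrix.vecTail]
  have hc : (h • M) ^ 3 = 0 := by rw [smul_pow, hM3, smul_zero]
  have hc' : (-(h • M)) ^ 3 = 0 := by rw [neg_pow, hc, mul_zero]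
  have e1 : NormedSpace.exp (h • M) =
      !![1, 2 * h, 2 * h ^ 2; 0, 1, 2 * h; 0, 0, 1] := by
    rw [exp_cube_zero hc, smul_pow, hMsq]
    ext i j
    fin_cases i <;> fin_cases j <;>
      simp [hM, Matrix.one_apply, Matrix.smul_apply, Matrix.vecHead, Matrix.vecTail, smul_eq_mul] <;> ring
  have e2 : NormedSpace.exp (-(h • M)) =
      !![1, -(2 * h), 2 * h ^ 2; 0, 1, -(2 * h); 0, 0, 1] := by
    rw [exp_cube_zero hc', neg_pow, smul_pow, hMsq]
    ext i j
    fin_cases i <;> fin_cases j <;>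
      simp [hM, Matrix.one_apply, Matrix.smul_apply, Matrix.vecHead, Matrix.vecTail, smul_eq_mul] <;> ring
  rw [e1, e2]
  refine ⟨?_, ?_, ?_⟩ <;>
  · ext i j
    fin_cases i <;> fin_cases j <;>
      simp [hM, Matrix.mul_apply, Fin.sum_univ_three, Matrix.vecHead, Matrix.vecTail, Matrix.smul_apply, smul_eq_mul] <;> ring
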